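/- With the numerical fluxes v*·n = τ(v·n) + (1−τ)(g·n) − α(n·σn − p), v*·m = v·m, p* = n·(σn)* = τp + (1−τ)(n·σn) − β((v−g)·n), m·(σn)* = 0, the pointwise interface power I = (p* − p)(g·n) + p((g·n)*) − (σn)·(v* − v) − (σn)*·v, where (g·n)* = v*·n, equals α(n·σn − p)² + β(g·n − v·n)² for all values of τ, α, β and all p ∈ ℝ, g, v ∈ ℝ², σ ∈ Matrix (Fin 2) (Fin 2) ℝ. -/
import Mathlib


open Matrix

/-- The algebraic core of Theorem 1: with the numerical fluxes of the
energy-based DG interface coupling, the interface power `I` equals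
`α(n·σn − p)² + β(g·n − v·n)²` for all τ, α, β, p, g, v, σ. -/
theorem interface_flux_identity (n m : Fin 2 → ℝ)
    (hn : n ⬝ᵥ n = 1) (hm : m ⬝ᵥ m = 1) (hnm : n ⬝ᵥ m = 0)
    (τ α β p : ℝ) (g v : Fin 2 → ℝ) (σ : Matrix (Fin 2) (Fin 2) ℝ) :
    let s : ℝ := n ⬝ᵥ σ.mulVec n
    -- normal component of v*: the flux (21)
    let vstarn : ℝ := τ * (v ⬝ᵥ n) + (1 - τ) * (g ⬝ᵥ n) - α * (s - p)
    -- tangential component of v*: the flux (22)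
    let vstarm : ℝ := v ⬝ᵥ m
    -- p* = n·(σn)*: the flux (23)
    let pstar : ℝ := τ * p + (1 - τ) * s - β * ((v - g) ⬝ᵥ n)
    -- v* and (σn)* reconstructed from their components (m·(σn)* = 0 by (24))
    let vstar : Fin 2 → ℝ := vstarn • n + vstarm • m
    let σnstar : Fin 2 → ℝ := pstar • n
    -- the interface power, with (g·n)* = v*·n
    (pstar - p) * (g ⬝ᵥ n) + p * vstarn
      - (σ.mulVec n) ⬝ᵥ (vstar - v) - σnstar ⬝ᵥ v
      = α * (s - p) ^ 2 + β * ((g ⬝ᵥ n) - (v ⬝ᵥ n)) ^ 2 := by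
  intro s vstarn vstarm pstar vstar σnstar
  simp only [dotProduct, mulVec, Fin.sum_univ_two] at hn hm hnm
  -- column orthonormality from row orthonormality
  have h00 : n 0 * n 0 + m 0 * m 0 = 1 := by
    linear_combination (m 1 * m 1) * hn + (1 - n 0 * n 0) * hm +
      (n 0 * m 0 - n 1 * m 1) * hnm
  have h11 : n 1 * n 1 + m 1 * m 1 = 1 := by
    linear_combination (m 0 * m 0) * hn + (1 - n 1 * n 1) * hm +
      (n 1 * m 1 - n 0 * m 0) * hnm
  have h01 : n 0 * n 1 + m 0 * m 1 = 0 := by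
    linear_combination (- (m 0 * m 1)) * hn + (- (n 0 * n 1)) * hm +
      (n 1 * m 0 + n 0 * m 1) * hnm
  simp only [s, vstarn, vstarm, pstar, vstar, σnstar, dotProduct, mulVec,
    Fin.sum_univ_two, Pi.add_apply, Pi.sub_apply, Pi.smul_apply, smul_eq_mul]
  linear_combination
    (-(v 0 * (σ 0 0 * n 0 + σ 0 1 * n 1))) * h00 +
    (-(v 1 * (σ 1 0 * n 0 + σ 1 1 * n 1))) * h11 +
    (-(v 1 * (σ 0 0 * n 0 + σ 0 1 * n 1) + v 0 * (σ 1 0 * n 0 + σ 1 1 * n 1))) * h01
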